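/- Let X and A be countable nonempty sets (states and actions), let P : X × A × X → [0,1] with ∑_{x'} P(x, a, x') = 1 for all (x, a) (transition probabilities), let π : X × A → [0,1] with ∑_{a'} π(x', a') = 1 for all x' (a policy), let r : X × A → ℝ be a reward function, let γ ∈ [0,1), and let N ≥ 1. For a bounded function θ : X × A → ℝ^N, define for each (x, a) the probability measure μ_θ(x, a) = ∑_{x' ∈ X} ∑_{a' ∈ A} P(x, a, x')·π(x', a') · (1/N) ∑_{j=1}^N δ_{r(x,a) + γ·θ_j(x', a')} on ℝ, and define the projected distributional Bellman operator Φ by (Φθ)_i(x, a) = F_{μ_θ(x,a)}⁻¹((2i−1)/(2N)) for i = 1, …, N. Then for all bounded θ, ψ : X × A → ℝ^N, sup_{x, a, i} |(Φθ)_i(x, a) − (Φψ)_i(x, a)| ≤ γ · sup_{x, a, j} |θ_j(x, a) − ψ_j(x, a)|. Equivalently, the combination of the quantile-midpoint W_1-projection with the distributional Bellman operator is a γ-contraction in the maximal ∞-Wasserstein metric d̄_∞ over quantile value distributions. -/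

import Mathlib

open MeasureTheory Set
open scoped ENNReal

/-- The CDF of a measure on ℝ: `F(y) = μ((-∞, y])`. -/
noncomputable def cdfFn (μ : Measure ℝ) (y : ℝ) : ℝ := (μ (Iic y)).toReal

/-- The quantile function (generalized inverse CDF): `F⁻¹(ω) = inf {y | ω ≤ F(y)}`. -/
noncomputable def quantileFn (μ : Measure ℝ) (ω : ℝ) : ℝ := sInf {y : ℝ | ω ≤ cdfFn μ y}

/-- The distributional Bellman backup at `(x, a)` of the quantile value distribution with atoms
`θ`, i.e. `μ_θ(x,a) = ∑_{x',a'} P(x,a,x') π(x',a') (1/N) ∑ⱼ δ_{r(x,a) + γ θ_j(x',a')}`. -/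
noncomputable def bellmanBackup {X A : Type*} [Countable X] [Countable A]
    (P : X → A → X → ℝ) (π : X → A → ℝ) (r : X → A → ℝ) (γ : ℝ) (N : ℕ)
    (θ : X × A → Fin N → ℝ) (x : X) (a : A) : Measure ℝ :=
  Measure.sum fun x' : X => Measure.sum fun a' : A =>
    ENNReal.ofReal (P x a x' * π x' a') •
      ((N : ℝ≥0∞)⁻¹ • ∑ j : Fin N, Measure.dirac (r x a + γ * θ (x', a') j))

/-- The projected distributional Bellman operator: `(Φθ)ᵢ(x,a)` is the quantile midpoint
`F⁻¹((2i-1)/(2N))` of the Bellman backup `μ_θ(x,a)` (with `i : Fin N` 0-indexed). -/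
noncomputable def projBellman {X A : Type*} [Countable X] [Countable A]
    (P : X → A → X → ℝ) (π : X → A → ℝ) (r : X → A → ℝ) (γ : ℝ) (N : ℕ)
    (θ : X × A → Fin N → ℝ) : X × A → Fin N → ℝ :=
  fun q i => quantileFn (bellmanBackup P π r γ N θ q.1 q.2) ((2 * (i : ℝ) + 1) / (2 * N))

section Aux

variable {X A : Type*} [Countable X] [Countable A]

/-- Explicit formula for the Bellman backup measure of a measurable set. -/
lemma backup_apply (P : X → A → X → ℝ) (π : X → A → ℝ) (r : X → A → ℝ) (γ : ℝ) (N : ℕ)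
    (θ : X × A → Fin N → ℝ) (x : X) (a : A) {s : Set ℝ} (hs : MeasurableSet s) :
    bellmanBackup P π r γ N θ x a s
      = ∑' x' : X, ∑' a' : A, ENNReal.ofReal (P x a x' * π x' a') *
          ((N : ℝ≥0∞)⁻¹ * ∑ j : Fin N, s.indicator 1 (r x a + γ * θ (x', a') j)) := by
  rw [bellmanBackup, Measure.sum_apply _ hs]
  refine tsum_congr fun x' => ?_
  rw [Measure.sum_apply _ hs]
  refine tsum_congr fun a' => ?_
  rw [Measure.smul_apply, Measure.smul_apply, Measure.finset_sum_apply, smul_eq_mul,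
    smul_eq_mul]
  congr 2
  exact Finset.sum_congr rfl fun j _ => Measure.dirac_apply' _ hs

/-- The total transition-policy weight is one. -/
lemma tsum_weights (P : X → A → X → ℝ) (hP01 : ∀ x a x', P x a x' ∈ Set.Icc (0:ℝ) 1)
    (hP : ∀ x a, ∑' x', P x a x' = 1)
    (π : X → A → ℝ) (hπ01 : ∀ x' a', π x' a' ∈ Set.Icc (0:ℝ) 1)
    (hπ : ∀ x', ∑' a', π x' a' = 1) (x : X) (a : A) :
    ∑' x' : X, ∑' a' : A, ENNReal.ofReal (P x a x' * π x' a') = 1 := by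
  have hπs : ∀ x', Summable (π x') := by
    intro x'
    by_contra h
    have h0 := tsum_eq_zero_of_not_summable h
    rw [hπ x'] at h0; norm_num at h0
  have hPs : Summable (P x a) := by
    by_contra h
    have h0 := tsum_eq_zero_of_not_summable h
    rw [hP x a] at h0; norm_num at h0
  have h1 : ∀ x', ∑' a' : A, ENNReal.ofReal (π x' a') = 1 := by
    intro x'
    rw [← ENNReal.ofReal_tsum_of_nonneg (fun a' => (hπ01 x' a').1) (hπs x'), hπ x',
      ENNReal.ofReal_one]
  calc ∑' x' : X, ∑' a' : A, ENNReal.ofReal (P x a x' * π x' a')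
      = ∑' x' : X, ENNReal.ofReal (P x a x') * ∑' a' : A, ENNReal.ofReal (π x' a') := by
        refine tsum_congr fun x' => ?_
        rw [← ENNReal.tsum_mul_left]
        exact tsum_congr fun a' => ENNReal.ofReal_mul (hP01 x a x').1
    _ = ∑' x' : X, ENNReal.ofReal (P x a x') := by
        refine tsum_congr fun x' => ?_
        rw [h1 x', mul_one]
    _ = 1 := by
        rw [← ENNReal.ofReal_tsum_of_nonneg (fun x' => (hP01 x a x').1) hPs, hP x a,
          ENNReal.ofReal_one]

/-- If a measurable set contains all atoms, the backup gives it full mass one. -/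
lemma backup_eq_one (P : X → A → X → ℝ) (hP01 : ∀ x a x', P x a x' ∈ Set.Icc (0:ℝ) 1)
    (hP : ∀ x a, ∑' x', P x a x' = 1)
    (π : X → A → ℝ) (hπ01 : ∀ x' a', π x' a' ∈ Set.Icc (0:ℝ) 1)
    (hπ : ∀ x', ∑' a', π x' a' = 1)
    (r : X → A → ℝ) (γ : ℝ) (N : ℕ) (hN : 1 ≤ N)
    (θ : X × A → Fin N → ℝ) (x : X) (a : A) {s : Set ℝ} (hs : MeasurableSet s)
    (hmem : ∀ x' a' j, r x a + γ * θ (x', a') j ∈ s) :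
    bellmanBackup P π r γ N θ x a s = 1 := by
  rw [backup_apply P π r γ N θ x a hs]
  have key : ∀ (x' : X) (a' : A),
      ((N : ℝ≥0∞)⁻¹ * ∑ j : Fin N, s.indicator 1 (r x a + γ * θ (x', a') j)) = 1 := by
    intro x' a'
    have hsum : ∑ j : Fin N, s.indicator (1 : ℝ → ℝ≥0∞) (r x a + γ * θ (x', a') j)
        = (N : ℝ≥0∞) := by
      rw [Finset.sum_congr rfl fun j _ => Set.indicator_of_mem (hmem x' a' j) 1]
      simp
    rw [hsum, ENNReal.inv_mul_cancel (Nat.cast_ne_zero.mpr (by omega))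
      (ENNReal.natCast_ne_top N)]
  simp_rw [key, mul_one]
  exact tsum_weights P hP01 hP π hπ01 hπ x a

/-- If a measurable set contains no atom, the backup gives it mass zero. -/
lemma backup_eq_zero (P : X → A → X → ℝ) (π : X → A → ℝ)
    (r : X → A → ℝ) (γ : ℝ) (N : ℕ)
    (θ : X × A → Fin N → ℝ) (x : X) (a : A) {s : Set ℝ} (hs : MeasurableSet s)
    (hmem : ∀ x' a' j, r x a + γ * θ (x', a') j ∉ s) :
    bellmanBackup P π r γ N θ x a s = 0 := by
  rw [backup_apply P π r γ N θ x a hs]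
  have key : ∀ (x' : X) (a' : A) (j : Fin N),
      s.indicator (1 : ℝ → ℝ≥0∞) (r x a + γ * θ (x', a') j) = 0 :=
    fun x' a' j => Set.indicator_of_notMem (hmem x' a' j) 1
  simp_rw [key, Finset.sum_const_zero, mul_zero, tsum_zero]

/-- A CDF-shift inequality between the backups of atom functions that are `C`-close. -/
lemma backup_Iic_le (P : X → A → X → ℝ) (π : X → A → ℝ)
    (r : X → A → ℝ) {γ : ℝ} (hγ0 : 0 ≤ γ) (N : ℕ)
    (θ ψ : X × A → Fin N → ℝ) (x : X) (a : A) {C : ℝ}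
    (hC : ∀ q j, |θ q j - ψ q j| ≤ C) (y : ℝ) :
    bellmanBackup P π r γ N θ x a (Iic y)
      ≤ bellmanBackup P π r γ N ψ x a (Iic (y + γ * C)) := by
  rw [backup_apply P π r γ N θ x a measurableSet_Iic,
    backup_apply P π r γ N ψ x a measurableSet_Iic]
  refine ENNReal.tsum_le_tsum fun x' => ENNReal.tsum_le_tsum fun a' =>
    mul_le_mul_right (mul_le_mul_right (Finset.sum_le_sum fun j _ => ?_) _) _
  by_cases h : r x a + γ * θ (x', a') j ≤ y
  · have habs : |γ * θ (x', a') j - γ * ψ (x', a') j| ≤ γ * C := by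
      rw [← mul_sub, abs_mul, abs_of_nonneg hγ0]
      exact mul_le_mul_of_nonneg_left (hC _ _) hγ0
    have h2 : r x a + γ * ψ (x', a') j ≤ y + γ * C := by
      have := abs_le.mp habs
      linarith [this.1]
    rw [Set.indicator_of_mem (mem_Iic.mpr h), Set.indicator_of_mem (mem_Iic.mpr h2)]
    simp
  · rw [Set.indicator_of_notMem (fun hc => h (mem_Iic.mp hc))]
    exact zero_le

/-- Quantiles shift by at most `ε` under a CDF-shift inequality. -/
lemma quantile_shift {μ ν : Measure ℝ} {ω ε : ℝ}
    (h : ∀ y, cdfFn μ y ≤ cdfFn ν (y + ε))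
    (hne : {y : ℝ | ω ≤ cdfFn μ y}.Nonempty)
    (hbdd : BddBelow {y : ℝ | ω ≤ cdfFn ν y}) :
    quantileFn ν ω ≤ quantileFn μ ω + ε := by
  have key : ∀ y ∈ {y : ℝ | ω ≤ cdfFn μ y}, quantileFn ν ω - ε ≤ y := by
    intro y hy
    have hmem : y + ε ∈ {y : ℝ | ω ≤ cdfFn ν y} := le_trans hy (h y)
    have := csInf_le hbdd hmem
    unfold quantileFn
    linarith [this]
  have h2 := le_csInf hne key
  unfold quantileFn at h2 ⊢
  linarith

end Aux

/-- the projected distributional Bellman operator is a `γ`-contraction in the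
sup-norm over atoms, i.e. in the maximal ∞-Wasserstein metric over quantile value
distributions. -/
theorem projected_bellman_contraction
    {X A : Type*} [Countable X] [Countable A] [Nonempty X] [Nonempty A]
    (P : X → A → X → ℝ) (hP01 : ∀ x a x', P x a x' ∈ Set.Icc (0:ℝ) 1)
    (hP : ∀ x a, ∑' x', P x a x' = 1)
    (π : X → A → ℝ) (hπ01 : ∀ x' a', π x' a' ∈ Set.Icc (0:ℝ) 1)
    (hπ : ∀ x', ∑' a', π x' a' = 1)
    (r : X → A → ℝ) (γ : ℝ) (hγ : γ ∈ Set.Ico (0:ℝ) 1) (N : ℕ) (hN : 1 ≤ N)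
    (θ ψ : X × A → Fin N → ℝ)
    (hθ : ∃ M : ℝ, ∀ q j, |θ q j| ≤ M) (hψ : ∃ M : ℝ, ∀ q j, |ψ q j| ≤ M) :
    (⨆ q : (X × A) × Fin N,
        |projBellman P π r γ N θ q.1 q.2 - projBellman P π r γ N ψ q.1 q.2|)
      ≤ γ * ⨆ q : (X × A) × Fin N, |θ q.1 q.2 - ψ q.1 q.2| := by
  obtain ⟨Mθ, hMθ⟩ := hθ
  obtain ⟨Mψ, hMψ⟩ := hψ
  obtain ⟨hγ0, _⟩ := hγ
  haveI : Nonempty (Fin N) := ⟨⟨0, by omega⟩⟩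
  set C : ℝ := ⨆ q : (X × A) × Fin N, |θ q.1 q.2 - ψ q.1 q.2| with hCdef
  have hbC : BddAbove (Set.range fun q : (X × A) × Fin N => |θ q.1 q.2 - ψ q.1 q.2|) := by
    refine ⟨Mθ + Mψ, ?_⟩
    rintro _ ⟨q, rfl⟩
    have h1 := abs_le.mp (hMθ q.1 q.2)
    have h2 := abs_le.mp (hMψ q.1 q.2)
    exact abs_le.mpr ⟨by linarith, by linarith⟩
  have hCk : ∀ q j, |θ q j - ψ q j| ≤ C := fun q j => le_ciSup hbC (q, j)
  have hCk' : ∀ q j, |ψ q j - θ q j| ≤ C := by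
    intro q j; rw [abs_sub_comm]; exact hCk q j
  -- bounds on ω
  have cdf_shift : ∀ (θ' ψ' : X × A → Fin N → ℝ),
      (∀ q j, |θ' q j - ψ' q j| ≤ C) → ∀ (x : X) (a : A) (y : ℝ),
      cdfFn (bellmanBackup P π r γ N θ' x a) y
        ≤ cdfFn (bellmanBackup P π r γ N ψ' x a) (y + γ * C) := by
    intro θ' ψ' hC' x a y
    have hfin : bellmanBackup P π r γ N ψ' x a (Iic (y + γ * C)) ≠ ⊤ := by
      have h1 : bellmanBackup P π r γ N ψ' x a (Iic (y + γ * C))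
          ≤ bellmanBackup P π r γ N ψ' x a Set.univ :=
        measure_mono (subset_univ _)
      rw [backup_eq_one P hP01 hP π hπ01 hπ r γ N hN ψ' x a MeasurableSet.univ
        (fun _ _ _ => mem_univ _)] at h1
      exact (lt_of_le_of_lt h1 ENNReal.one_lt_top).ne
    exact ENNReal.toReal_mono hfin (backup_Iic_le P π r hγ0 N θ' ψ' x a hC' y)
  have hne : ∀ (θ' : X × A → Fin N → ℝ) (M : ℝ), (∀ q j, |θ' q j| ≤ M) →
      ∀ (x : X) (a : A) (i : Fin N),
      {y : ℝ | (2 * (i : ℝ) + 1) / (2 * N) ≤ cdfFn (bellmanBackup P π r γ N θ' x a) y}.Nonempty := by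
    intro θ' M hM x a i
    refine ⟨r x a + γ * M, ?_⟩
    have hcdf : cdfFn (bellmanBackup P π r γ N θ' x a) (r x a + γ * M) = 1 := by
      have h1 : bellmanBackup P π r γ N θ' x a (Iic (r x a + γ * M)) = 1 := by
        refine backup_eq_one P hP01 hP π hπ01 hπ r γ N hN θ' x a measurableSet_Iic ?_
        intro x' a' j
        have := le_trans (le_abs_self _) (hM (x', a') j)
        have := mul_le_mul_of_nonneg_left this hγ0
        simp only [mem_Iic]
        linarith
      rw [cdfFn, h1, ENNReal.toReal_one]
    rw [Set.mem_setOf_eq, hcdf]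
    rw [div_le_one (by positivity)]
    have : (i : ℝ) ≤ (N : ℝ) - 1 := by
      have := i.isLt
      have : (i : ℝ) + 1 ≤ (N : ℝ) := by exact_mod_cast i.isLt
      linarith
    linarith
  have hbdd : ∀ (θ' : X × A → Fin N → ℝ) (M : ℝ), (∀ q j, |θ' q j| ≤ M) →
      ∀ (x : X) (a : A) (i : Fin N),
      BddBelow {y : ℝ | (2 * (i : ℝ) + 1) / (2 * N)
        ≤ cdfFn (bellmanBackup P π r γ N θ' x a) y} := by
    intro θ' M hM x a i
    refine ⟨r x a - γ * M, ?_⟩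
    intro y hy
    by_contra hlt
    push_neg at hlt
    have h0 : bellmanBackup P π r γ N θ' x a (Iic y) = 0 := by
      refine backup_eq_zero P π r γ N θ' x a measurableSet_Iic ?_
      intro x' a' j hc
      rw [mem_Iic] at hc
      have h1 := le_trans (le_abs_self _) (hM (x', a') j)
      have h2 := abs_le.mp (hM (x', a') j)
      have h3 : -(γ * M) ≤ γ * θ' (x', a') j := by
        have := mul_le_mul_of_nonneg_left h2.1 hγ0
        linarith
      linarith
    have hcdf : cdfFn (bellmanBackup P π r γ N θ' x a) y = 0 := by
      rw [cdfFn, h0, ENNReal.toReal_zero]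
    rw [Set.mem_setOf_eq, hcdf] at hy
    have hpos : (0:ℝ) < (2 * (i : ℝ) + 1) / (2 * N) := by positivity
    linarith
  refine ciSup_le fun q => ?_
  obtain ⟨⟨x, a⟩, i⟩ := q
  have hub := quantile_shift (μ := bellmanBackup P π r γ N ψ x a)
    (ν := bellmanBackup P π r γ N θ x a)
    (cdf_shift ψ θ hCk' x a) (hne ψ Mψ hMψ x a i) (hbdd θ Mθ hMθ x a i)
  have hlb := quantile_shift (μ := bellmanBackup P π r γ N θ x a)
    (ν := bellmanBackup P π r γ N ψ x a)
    (cdf_shift θ ψ hCk x a) (hne θ Mθ hMθ x a i) (hbdd ψ Mψ hMψ x a i)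
  simp only [projBellman]
  exact abs_le.mpr ⟨by linarith, by linarith⟩
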